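/- arXiv:1711.03721 — 2 statements merged into one kernel-verified Lean document; each statement's English description precedes it below -/
import Mathlib

section
/- (Minkowski linear forms theorem for function fields) Let A be an n×n matrix over k_∞ with det(A) ≠ 0, defining linear forms L_1,...,L_n, and let r_1,...,r_n be integers with r_1 + ... + r_n < v(det A) + n. Then there exists a nonzero point u ∈ K^n such that v(L_i(u)) ≥ r_i for all 1 ≤ i ≤ n. -/
set_option linter.unusedSectionVars false
set_option maxHeartbeats 1000000

open FunctionField Multiplicative WithZero

variable (Fq : Type) [Field Fq] [Fintype Fq] [DecidableEq (RatFunc Fq)]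

/-- The embedding of the rational function field into its completion at infinity. -/
noncomputable def embR : RatFunc Fq →+* RatFunc.CompletionAtInfty Fq :=
  letI := RatFunc.inftyValued Fq
  UniformSpace.Completion.coeRingHom

/-- The embedding of the polynomial ring `K = Fq[T]` into `k∞`. -/
noncomputable def embP : Polynomial Fq →+* RatFunc.CompletionAtInfty Fq :=
  (embR Fq).comp (algebraMap (Polynomial Fq) (RatFunc Fq))

/-- The absolute value `|α| = q^{-v(α)}` on `k∞`. -/
noncomputable def vabs (α : RatFunc.CompletionAtInfty Fq) : ℝ :=
  if h : Valued.v α = (0 : WithZero (Multiplicative ℤ)) then 0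
  else (Fintype.card Fq : ℝ) ^ (toAdd (unzero h))

/-- The distance `‖α‖` from `α` to the nearest polynomial. -/
noncomputable def pnorm (α : RatFunc.CompletionAtInfty Fq) : ℝ :=
  ⨅ A : Polynomial Fq, vabs Fq (α - embP Fq A)

namespace MinkAux
variable {Fq}

local notation "K∞" => RatFunc.CompletionAtInfty Fq
local notation "ℤᵐ" => WithZero (Multiplicative ℤ)

lemma v_embR (f : RatFunc Fq) : Valued.v (embR Fq f) = RatFunc.inftyValuationDef Fq f := by
  have : Valued.v (embR Fq f) = @Valued.v (RatFunc Fq) _ _ _ (RatFunc.inftyValued Fq) f :=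
    @Valued.valuedCompletion_apply (RatFunc Fq) _ _ _ (RatFunc.inftyValued Fq) f
  rw [this, RatFunc.inftyValued.def]

lemma v_embP {p : Polynomial Fq} (hp : p ≠ 0) :
    Valued.v (embP Fq p) = (ofAdd (p.natDegree : ℤ) : Multiplicative ℤ) := by
  show Valued.v (embR Fq (algebraMap (Polynomial Fq) (RatFunc Fq) p)) = _
  rw [v_embR, RatFunc.inftyValuation.polynomial Fq hp]
  rfl

lemma v_ne_zero {α : K∞} (h : α ≠ 0) : Valued.v α ≠ (0 : ℤᵐ) :=
  (Valuation.ne_zero_iff Valued.v).2 h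

lemma v_embP_le_one {p : Polynomial Fq} (hp : p.natDegree = 0) :
    Valued.v (embP Fq p) ≤ (1 : ℤᵐ) := by
  rcases eq_or_ne p 0 with h | h
  · simp [h]
  · simp [v_embP h, hp]

lemma one_le_v_embP {p : Polynomial Fq} (hp : p ≠ 0) : (1 : ℤᵐ) ≤ Valued.v (embP Fq p) := by
  rw [v_embP hp]
  have : ((ofAdd (0 : ℤ) : Multiplicative ℤ) : ℤᵐ) ≤ (ofAdd (p.natDegree : ℤ) : Multiplicative ℤ) := by
    rw [coe_le_coe]
    exact Multiplicative.ofAdd_le.mpr (Int.ofNat_nonneg _)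
  simpa using this

lemma lt_one_le {x : ℤᵐ} (h : x < 1) : x ≤ ((ofAdd (-1 : ℤ) : Multiplicative ℤ) : ℤᵐ) := by
  induction x using WithZero.recZeroCoe with
  | zero => exact zero_le'
  | coe u =>
    rw [coe_le_coe]
    rw [show (1 : ℤᵐ) = ((1 : Multiplicative ℤ) : ℤᵐ) from rfl, coe_lt_coe] at h
    have : toAdd u < 0 := h
    have : toAdd u ≤ -1 := by omega
    exact Multiplicative.ofAdd_le.mpr this |>.trans_eq (by simp)

lemma exists_ratfunc_close (α : K∞) : ∃ f : RatFunc Fq, Valued.v (α - embR Fq f) < (1 : ℤᵐ) := by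
  letI := RatFunc.inftyValued Fq
  have hd : DenseRange (embR Fq) := UniformSpace.Completion.denseRange_coe
  have hS : {y : K∞ | Valued.v (y - α) < (1 : ℤᵐ)} ∈ nhds α := by
    rw [Valued.mem_nhds]
    exact ⟨1, fun y hy => by simpa using hy⟩
  obtain ⟨y, hy, f, hf⟩ := mem_closure_iff_nhds.mp (hd α) _ hS
  refine ⟨f, ?_⟩
  rw [Valuation.map_sub_swap, hf]
  exact hy

lemma ratfunc_part (f : RatFunc Fq) :
    ∃ Q : Polynomial Fq,
      RatFunc.inftyValuationDef Fq (f - algebraMap (Polynomial Fq) (RatFunc Fq) Q) < (1 : ℤᵐ) := by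
  classical
  refine ⟨f.num / f.denom, ?_⟩
  set Q := f.num / f.denom with hQ
  set g := f - algebraMap (Polynomial Fq) (RatFunc Fq) Q with hg
  rcases eq_or_ne g 0 with h0 | h0
  · rw [h0, RatFunc.inftyValuationDef, if_pos rfl]
    exact zero_lt_one
  have hdnz : f.denom ≠ 0 := f.denom_ne_zero
  have hdnz' : algebraMap (Polynomial Fq) (RatFunc Fq) f.denom ≠ 0 :=
    RatFunc.algebraMap_ne_zero hdnz
  have hgd : g = algebraMap (Polynomial Fq) (RatFunc Fq) (f.num % f.denom) /
      algebraMap (Polynomial Fq) (RatFunc Fq) f.denom := by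
    have hmod : f.num % f.denom = f.num - f.denom * Q := by
      have h := EuclideanDomain.div_add_mod f.num f.denom
      rw [hQ, eq_sub_iff_add_eq, add_comm]
      exact h
    have hf : f * algebraMap (Polynomial Fq) (RatFunc Fq) f.denom =
        algebraMap (Polynomial Fq) (RatFunc Fq) f.num := by
      exact ((div_eq_iff hdnz').1 (RatFunc.num_div_denom f)).symm
    rw [hg, hmod]
    rw [eq_div_iff hdnz', sub_mul, hf, map_sub, map_mul]
    ring
  have hRnz : f.num % f.denom ≠ 0 := by
    intro h
    apply h0
    rw [hgd, h, map_zero, zero_div]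
  have hRd : (f.num % f.denom).degree < f.denom.degree := EuclideanDomain.mod_lt _ hdnz
  have hRd' : (f.num % f.denom).natDegree < f.denom.natDegree :=
    Polynomial.natDegree_lt_natDegree hRnz hRd
  have hv : RatFunc.inftyValuationDef Fq g =
      (ofAdd ((f.num % f.denom).natDegree : ℤ) : Multiplicative ℤ) /
      (ofAdd ((f.denom).natDegree : ℤ) : Multiplicative ℤ) := by
    rw [hgd]
    rw [show RatFunc.inftyValuationDef Fq _ = RatFunc.inftyValuation Fq _ from rfl]
    rw [map_div₀]
    rw [inftyValuation_apply, inftyValuation_apply, RatFunc.inftyValuation.polynomial Fq hRnz,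
      RatFunc.inftyValuation.polynomial Fq hdnz]
    rfl
  rw [hv]
  rw [div_lt_iff₀ (zero_lt_coe _)]
  rw [one_mul, coe_lt_coe]
  exact Multiplicative.ofAdd_lt.mpr (by exact_mod_cast hRd')

lemma exists_polyPart (α : K∞) : ∃ P : Polynomial Fq, Valued.v (α - embP Fq P) < (1 : ℤᵐ) := by
  obtain ⟨f, hf⟩ := exists_ratfunc_close α
  obtain ⟨Q, hQ⟩ := ratfunc_part f
  refine ⟨Q, ?_⟩
  have h2 : Valued.v (embR Fq f - embP Fq Q) < (1 : ℤᵐ) := by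
    have : embR Fq f - embP Fq Q = embR Fq (f - algebraMap (Polynomial Fq) (RatFunc Fq) Q) := by
      rw [map_sub]; rfl
    rw [this, v_embR]
    exact hQ
  have : α - embP Fq Q = (α - embR Fq f) + (embR Fq f - embP Fq Q) := by ring
  rw [this]
  exact lt_of_le_of_lt (Valued.v.map_add _ _) (max_lt hf h2)

noncomputable def polyPart (α : K∞) : Polynomial Fq := (exists_polyPart α).choose

lemma polyPart_spec (α : K∞) : Valued.v (α - embP Fq (polyPart α)) < (1 : ℤᵐ) :=
  (exists_polyPart α).choose_spec

lemma polyPart_unique {α : K∞} {P : Polynomial Fq}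
    (h : Valued.v (α - embP Fq P) < (1 : ℤᵐ)) : P = polyPart α := by
  by_contra hne
  have hd : P - polyPart α ≠ 0 := sub_ne_zero_of_ne hne
  have h1 : (1 : ℤᵐ) ≤ Valued.v (embP Fq (P - polyPart α)) := one_le_v_embP hd
  have h2 : embP Fq (P - polyPart α) = (α - embP Fq (polyPart α)) - (α - embP Fq P) := by
    rw [map_sub]; ring
  have h3 : Valued.v (embP Fq (P - polyPart α)) < 1 := by
    rw [h2]
    exact lt_of_le_of_lt (Valuation.map_sub Valued.v _ _) (max_lt (polyPart_spec α) h)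
  exact absurd (lt_of_le_of_lt h1 h3) (lt_irrefl _)

lemma polyPart_zero : polyPart (0 : K∞) = (0 : Polynomial Fq) :=
  (polyPart_unique (by simp)).symm

lemma polyPart_add (α β : K∞) : polyPart (α + β) = polyPart α + polyPart β := by
  refine (polyPart_unique ?_).symm
  have : α + β - embP Fq (polyPart α + polyPart β) =
      (α - embP Fq (polyPart α)) + (β - embP Fq (polyPart β)) := by
    rw [map_add]; ring
  rw [this]
  exact lt_of_le_of_lt (Valued.v.map_add _ _) (max_lt (polyPart_spec α) (polyPart_spec β))

lemma polyPart_Cmul (c : Fq) (α : K∞) :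
    polyPart (embP Fq (Polynomial.C c) * α) = Polynomial.C c * polyPart α := by
  refine (polyPart_unique ?_).symm
  have : embP Fq (Polynomial.C c) * α - embP Fq (Polynomial.C c * polyPart α) =
      embP Fq (Polynomial.C c) * (α - embP Fq (polyPart α)) := by
    rw [map_mul]; ring
  rw [this, Valued.v.map_mul]
  calc Valued.v (embP Fq (Polynomial.C c)) * Valued.v (α - embP Fq (polyPart α))
      ≤ 1 * Valued.v (α - embP Fq (polyPart α)) :=
        mul_le_mul_left (v_embP_le_one (Polynomial.natDegree_C c)) _
    _ < 1 := by rw [one_mul]; exact polyPart_spec α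

lemma v_polyPart_le (α : K∞) :
    Valued.v (embP Fq (polyPart α)) ≤ max (Valued.v α) 1 := by
  have h : embP Fq (polyPart α) = α - (α - embP Fq (polyPart α)) := by ring
  rw [h]
  exact le_trans (Valuation.map_sub Valued.v _ _)
    (max_le_max (le_refl _) (le_of_lt (polyPart_spec α)))

lemma polyPart_natDegree_le {α : K∞} {m : ℕ}
    (h : Valued.v α ≤ ((ofAdd (m : ℤ) : Multiplicative ℤ) : ℤᵐ))
    (hne : (polyPart α : Polynomial Fq) ≠ 0) : (polyPart α).natDegree ≤ m := by
  have h1 : ((1 : Multiplicative ℤ) : ℤᵐ) ≤ ((ofAdd (m : ℤ) : Multiplicative ℤ) : ℤᵐ) := by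
    rw [coe_le_coe, show (1 : Multiplicative ℤ) = ofAdd (0 : ℤ) from rfl]
    exact Multiplicative.ofAdd_le.mpr (Int.ofNat_nonneg _)
  have h2 : Valued.v (embP Fq (polyPart α)) ≤ ((ofAdd (m : ℤ) : Multiplicative ℤ) : ℤᵐ) :=
    le_trans (v_polyPart_le α) (max_le h (by simpa using h1))
  rw [v_embP hne, coe_le_coe] at h2
  exact_mod_cast Multiplicative.ofAdd_le.mp h2

lemma resid_spec {α : K∞} (h : Valued.v α ≤ (1 : ℤᵐ)) :
    Valued.v (α - embP Fq (Polynomial.C ((polyPart α).coeff 0))) < (1 : ℤᵐ) := by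
  rcases eq_or_ne (polyPart α : Polynomial Fq) 0 with h0 | h0
  · have : (polyPart α : Polynomial Fq).coeff 0 = 0 := by rw [h0]; simp
    rw [this]
    simpa [← h0] using polyPart_spec α
  · have hdeg : (polyPart α : Polynomial Fq).natDegree = 0 :=
      Nat.le_zero.mp (polyPart_natDegree_le (by simpa using h) h0)
    have : Polynomial.C ((polyPart α).coeff 0) = polyPart α :=
      (Polynomial.eq_C_of_natDegree_eq_zero hdeg).symm
    rw [this]
    exact polyPart_spec α


noncomputable def tpow (Fq : Type) [Field Fq] [Fintype Fq] [DecidableEq (RatFunc Fq)]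
    (m : ℤ) : RatFunc.CompletionAtInfty Fq := (embP Fq Polynomial.X) ^ m

lemma embP_X_ne_zero : embP Fq Polynomial.X ≠ 0 := by
  intro h
  have := v_embP (Polynomial.X_ne_zero (R := Fq))
  rw [h, map_zero] at this
  exact zero_ne_coe this

lemma tpow_ne_zero (m : ℤ) : tpow Fq m ≠ 0 := zpow_ne_zero m embP_X_ne_zero

lemma v_tpow (m : ℤ) : Valued.v (tpow Fq m) = ((ofAdd m : Multiplicative ℤ) : ℤᵐ) := by
  rw [tpow, map_zpow₀, v_embP (Polynomial.X_ne_zero (R := Fq)), Polynomial.natDegree_X]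
  rw [← coe_zpow]
  congr 1
  apply Multiplicative.toAdd.injective
  rw [toAdd_zpow]
  simp

lemma tpow_zero : tpow Fq 0 = 1 := zpow_zero _

lemma tpow_add (a b : ℤ) : tpow Fq (a + b) = tpow Fq a * tpow Fq b :=
  zpow_add₀ embP_X_ne_zero a b

lemma tpow_natCast (m : ℕ) : tpow Fq (m : ℤ) = embP Fq (Polynomial.X ^ m) := by
  rw [tpow, zpow_natCast, map_pow]

lemma v_prod_sub {ι : Type*} [DecidableEq ι] (s : Finset ι) (x y : ι → RatFunc.CompletionAtInfty Fq)
    (hx : ∀ i, Valued.v (x i) ≤ (1 : ℤᵐ)) (hy : ∀ i, Valued.v (y i) ≤ (1 : ℤᵐ))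
    (hxy : ∀ i, Valued.v (x i - y i) < (1 : ℤᵐ)) :
    Valued.v (∏ i ∈ s, x i - ∏ i ∈ s, y i) < (1 : ℤᵐ) := by
  induction s using Finset.induction with
  | empty => simpa using (zero_lt_one : (0 : ℤᵐ) < 1)
  | @insert a s ha ih =>
    rw [Finset.prod_insert ha, Finset.prod_insert ha]
    have key : x a * ∏ i ∈ s, x i - y a * ∏ i ∈ s, y i =
        x a * (∏ i ∈ s, x i - ∏ i ∈ s, y i) + (x a - y a) * ∏ i ∈ s, y i := by ring
    rw [key]
    refine lt_of_le_of_lt (Valued.v.map_add _ _) (max_lt ?_ ?_)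
    · rw [Valued.v.map_mul]
      calc Valued.v (x a) * Valued.v (∏ i ∈ s, x i - ∏ i ∈ s, y i)
          ≤ 1 * Valued.v (∏ i ∈ s, x i - ∏ i ∈ s, y i) := mul_le_mul_left (hx a) _
        _ < 1 := by rw [one_mul]; exact ih
    · rw [Valued.v.map_mul]
      have hprod : Valued.v (∏ i ∈ s, y i) ≤ (1 : ℤᵐ) := by
        rw [map_prod]
        exact Finset.prod_le_one (fun i _ => zero_le') (fun i _ => hy i)
      calc Valued.v (x a - y a) * Valued.v (∏ i ∈ s, y i)
          ≤ Valued.v (x a - y a) * 1 := mul_le_mul_right hprod _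
        _ < 1 := by rw [mul_one]; exact hxy a

lemma v_det_sub {n : ℕ} (X Y : Matrix (Fin n) (Fin n) (RatFunc.CompletionAtInfty Fq))
    (hx : ∀ i j, Valued.v (X i j) ≤ (1 : ℤᵐ)) (hy : ∀ i j, Valued.v (Y i j) ≤ (1 : ℤᵐ))
    (hxy : ∀ i j, Valued.v (X i j - Y i j) < (1 : ℤᵐ)) :
    Valued.v (X.det - Y.det) < (1 : ℤᵐ) := by
  rw [Matrix.det_apply, Matrix.det_apply, ← Finset.sum_sub_distrib]
  have hlt : ((ofAdd (-1 : ℤ) : Multiplicative ℤ) : ℤᵐ) < 1 := by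
    rw [show (1 : ℤᵐ) = ((ofAdd (0 : ℤ) : Multiplicative ℤ) : ℤᵐ) from rfl, coe_lt_coe]
    exact Multiplicative.ofAdd_lt.mpr (by norm_num)
  refine lt_of_le_of_lt (Valued.v.map_sum_le fun σ _ => ?_) hlt
  have hsmul : (Equiv.Perm.sign σ • ∏ i, X (σ i) i) - (Equiv.Perm.sign σ • ∏ i, Y (σ i) i) =
      Equiv.Perm.sign σ • (∏ i, X (σ i) i - ∏ i, Y (σ i) i) := (smul_sub _ _ _).symm
  rw [hsmul]
  have hv : Valued.v (Equiv.Perm.sign σ • (∏ i, X (σ i) i - ∏ i, Y (σ i) i)) =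
      Valued.v (∏ i, X (σ i) i - ∏ i, Y (σ i) i) := by
    rcases Int.units_eq_one_or (Equiv.Perm.sign σ) with h | h
    · rw [h, one_smul]
    · rw [h, Units.smul_def, Units.val_neg, Units.val_one, neg_smul, one_smul,
        Valuation.map_neg]
  rw [hv]
  exact lt_one_le (v_prod_sub Finset.univ _ _ (fun i => hx _ _) (fun i => hy _ _)
    (fun i => hxy _ _))


lemma direct {n : ℕ} (hn : 0 < n) (A : Matrix (Fin n) (Fin n) (RatFunc.CompletionAtInfty Fq))
    (hcolnz : ∀ j, ∃ i, A i j ≠ 0)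
    (hcol : (∏ j, Finset.univ.sup fun i => Valued.v (A i j)) ≤
      ((ofAdd ((n : ℤ) - 1) : Multiplicative ℤ) : ℤᵐ)) :
    ∃ u : Fin n → Polynomial Fq, u ≠ 0 ∧
      ∀ i, Valued.v (∑ j, A i j * embP Fq (u j)) ≤ (1 : ℤᵐ) := by
  classical
  have : Nonempty (Fin n) := ⟨⟨0, hn⟩⟩
  set γ : Fin n → ℤᵐ := fun j => Finset.univ.sup fun i => Valued.v (A i j) with hγdef
  have hγ : ∀ j, γ j ≠ 0 := by
    intro j h0
    obtain ⟨i, hi⟩ := hcolnz j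
    have h1 : Valued.v (A i j) ≤ γ j :=
      Finset.le_sup (f := fun i => Valued.v (A i j)) (Finset.mem_univ i)
    rw [h0, le_zero_iff] at h1
    exact v_ne_zero hi h1
  set e : Fin n → ℤ := fun j => toAdd (unzero (hγ j)) with hedef
  have hγe : ∀ j, γ j = ((ofAdd (e j) : Multiplicative ℤ) : ℤᵐ) := by
    intro j
    rw [hedef]
    simp only [ofAdd_toAdd, coe_unzero]
  have hsum : ∑ j, e j ≤ (n : ℤ) - 1 := by
    have h1 : (∏ j, γ j) = ((ofAdd (∑ j, e j) : Multiplicative ℤ) : ℤᵐ) := by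
      rw [Finset.prod_congr rfl fun j _ => hγe j, ofAdd_sum]
      induction (Finset.univ : Finset (Fin n)) using Finset.induction with
      | empty => simp
      | @insert a s ha ih =>
        rw [Finset.prod_insert ha, Finset.prod_insert ha, ih, WithZero.coe_mul]
    rw [h1] at hcol
    rw [coe_le_coe] at hcol
    exact Multiplicative.ofAdd_le.mp hcol
  set t : ℤ := max 1 (Finset.univ.sup' Finset.univ_nonempty e + 1) with htdef
  have ht1 : 1 ≤ t := le_max_left _ _
  have hte : ∀ j, e j + 1 ≤ t := by
    intro j
    exact le_trans (add_le_add_left (Finset.le_sup' e (Finset.mem_univ j)) 1) (le_max_right _ _)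
  set d : Fin n → ℕ := fun j => (t - e j).toNat with hddef
  have hd : ∀ j, (d j : ℤ) = t - e j := by
    intro j
    rw [hddef]
    exact Int.toNat_of_nonneg (by have := hte j; omega)
  set m : ℕ := (t - 1).toNat with hmdef
  have hm : (m : ℤ) = t - 1 := Int.toNat_of_nonneg (by omega)
  -- the linear map
  set pj : ∀ j : Fin n, (Fin (d j) → Fq) → Polynomial Fq :=
    fun j y => ((Polynomial.degreeLTEquiv Fq (d j)).symm y : Polynomial Fq) with hpjdef
  set L : ((j : Fin n) → (Fin (d j) → Fq)) → Fin n → RatFunc.CompletionAtInfty Fq :=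
    fun x i => ∑ j, A i j * embP Fq (pj j (x j)) with hLdef
  set φ : ((j : Fin n) → (Fin (d j) → Fq)) → (Fin n → Fin m → Fq) :=
    fun x i s => (polyPart (L x i)).coeff ((s : ℕ) + 1) with hφdef
  have hpj_add : ∀ j y z, pj j (y + z) = pj j y + pj j z := by
    intro j y z
    rw [hpjdef]
    simp only [map_add, Submodule.coe_add]
  have hpj_smul : ∀ j (c : Fq) y, pj j (c • y) = Polynomial.C c * pj j y := by
    intro j c y
    rw [hpjdef]
    simp only [map_smul, SetLike.val_smul, Polynomial.smul_eq_C_mul]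
  have hL_add : ∀ x y i, L (x + y) i = L x i + L y i := by
    intro x y i
    rw [hLdef]
    simp only [Pi.add_apply]
    rw [← Finset.sum_add_distrib]
    refine Finset.sum_congr rfl fun j _ => ?_
    rw [hpj_add, map_add, mul_add]
  have hL_smul : ∀ (c : Fq) x i, L (c • x) i = embP Fq (Polynomial.C c) * L x i := by
    intro c x i
    rw [hLdef]
    simp only [Pi.smul_apply]
    rw [Finset.mul_sum]
    refine Finset.sum_congr rfl fun j _ => ?_
    rw [hpj_smul, map_mul]
    ring
  have hlin : IsLinearMap Fq φ := by
    constructor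
    · intro x y
      funext i s
      rw [hφdef]
      simp only [Pi.add_apply]
      rw [hL_add, polyPart_add, Polynomial.coeff_add]
    · intro c x
      funext i s
      rw [hφdef]
      simp only [Pi.smul_apply, smul_eq_mul]
      rw [hL_smul, polyPart_Cmul, Polynomial.coeff_C_mul]
  set Φ := IsLinearMap.mk' φ hlin with hΦdef
  have hcount : Module.finrank Fq (Fin n → Fin m → Fq) <
      Module.finrank Fq ((j : Fin n) → (Fin (d j) → Fq)) := by
    have h1 : Module.finrank Fq ((j : Fin n) → (Fin (d j) → Fq)) = ∑ j, d j := by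
      rw [Module.finrank_pi_fintype]
      congr 1
      funext j
      rw [Module.finrank_pi, Fintype.card_fin]
    have h2 : Module.finrank Fq (Fin n → Fin m → Fq) = n * m := by
      rw [Module.finrank_pi_fintype]
      have : ∀ j : Fin n, Module.finrank Fq (Fin m → Fq) = m := fun j => by
        rw [Module.finrank_pi, Fintype.card_fin]
      rw [Finset.sum_congr rfl fun j _ => this j, Finset.sum_const, Finset.card_univ,
        Fintype.card_fin, smul_eq_mul]
    rw [h1, h2]
    have hcast : ((∑ j, d j : ℕ) : ℤ) = (n : ℤ) * t - ∑ j, e j := by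
      push_cast
      rw [Finset.sum_congr rfl fun j _ => hd j]
      rw [Finset.sum_sub_distrib, Finset.sum_const, Finset.card_univ, Fintype.card_fin]
      ring
    have hcast2 : ((n * m : ℕ) : ℤ) = (n : ℤ) * t - n := by
      push_cast
      rw [hm]
      ring
    have : ((n * m : ℕ) : ℤ) < ((∑ j, d j : ℕ) : ℤ) := by
      rw [hcast, hcast2]
      have hn1 : (1 : ℤ) ≤ (n : ℤ) := by exact_mod_cast hn
      linarith
    exact_mod_cast this
  have hker : LinearMap.ker Φ ≠ ⊥ := by
    intro h
    have hinj : Function.Injective Φ := LinearMap.ker_eq_bot.mp h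
    have := LinearMap.finrank_le_finrank_of_injective hinj
    omega
  obtain ⟨x, hxker, hx0⟩ := (Submodule.ne_bot_iff _).mp hker
  refine ⟨fun j => pj j (x j), ?_, ?_⟩
  · intro h
    apply hx0
    funext j
    have : pj j (x j) = 0 := congrFun h j
    rw [hpjdef] at this
    have h2 : (Polynomial.degreeLTEquiv Fq (d j)).symm (x j) = 0 := by
      exact Subtype.ext this
    have := (LinearEquiv.map_eq_zero_iff _).mp h2
    exact this
  · intro i
    have hvL : Valued.v (L x i) ≤ ((ofAdd (t - 1) : Multiplicative ℤ) : ℤᵐ) := by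
      rw [hLdef]
      refine Valued.v.map_sum_le fun j _ => ?_
      rcases eq_or_ne (pj j (x j)) 0 with h0 | h0
      · rw [h0]
        simp
      · rw [Valued.v.map_mul, v_embP h0]
        have hdegmem : (pj j (x j)).degree < (d j : WithBot ℕ) := by
          rw [hpjdef]
          exact Polynomial.mem_degreeLT.mp ((Polynomial.degreeLTEquiv Fq (d j)).symm (x j)).2
        have hdeg : (pj j (x j)).natDegree < d j :=
          (Polynomial.natDegree_lt_iff_degree_lt h0).mpr hdegmem
        have hvA : Valued.v (A i j) ≤ ((ofAdd (e j) : Multiplicative ℤ) : ℤᵐ) := by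
          rw [← hγe j]
          exact Finset.le_sup (f := fun i => Valued.v (A i j)) (Finset.mem_univ i)
        calc Valued.v (A i j) * ((ofAdd ((pj j (x j)).natDegree : ℤ) : Multiplicative ℤ) : ℤᵐ)
            ≤ ((ofAdd (e j) : Multiplicative ℤ) : ℤᵐ) *
              ((ofAdd (t - e j - 1) : Multiplicative ℤ) : ℤᵐ) := by
              refine mul_le_mul' hvA ?_
              rw [coe_le_coe]
              refine Multiplicative.ofAdd_le.mpr ?_
              have hdj := hd j
              omega
          _ = ((ofAdd (t - 1) : Multiplicative ℤ) : ℤᵐ) := by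
              rw [← coe_mul, ← ofAdd_add]
              congr 1
              ring_nf
    have hφx : ∀ s : Fin m, (polyPart (L x i)).coeff ((s : ℕ) + 1) = 0 := by
      intro s
      have h1 : Φ x = 0 := hxker
      have h2 : φ x = 0 := h1
      exact congrFun (congrFun h2 i) s
    set P := (polyPart (L x i) : Polynomial Fq) with hPdef
    have hP1 : Valued.v (embP Fq P) ≤ (1 : ℤᵐ) := by
      rcases eq_or_ne P 0 with h0 | h0
      · rw [h0]; simp
      · have hdegP : P.natDegree ≤ m := by
          refine polyPart_natDegree_le ?_ h0
          rw [show ((m : ℕ) : ℤ) = t - 1 from hm]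
          exact hvL
        have hdeg0 : P.natDegree = 0 := by
          by_contra hne0
          have h1 : 1 ≤ P.natDegree := Nat.one_le_iff_ne_zero.mpr hne0
          have h2 : P.natDegree - 1 < m := by omega
          have h3 := hφx ⟨P.natDegree - 1, h2⟩
          simp only at h3
          rw [show (P.natDegree - 1) + 1 = P.natDegree by omega] at h3
          exact (Polynomial.leadingCoeff_ne_zero.mpr h0) h3
        exact v_embP_le_one hdeg0
    show Valued.v (L x i) ≤ (1 : ℤᵐ)
    have : L x i = (L x i - embP Fq P) + embP Fq P := by ring
    rw [this]
    refine le_trans (Valued.v.map_add _ _) (max_le ?_ hP1)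
    exact le_of_lt (lt_of_lt_of_le (polyPart_spec (L x i)) le_rfl)

lemma coe_prod_zm {ι : Type*} (s : Finset ι) (f : ι → Multiplicative ℤ) :
    (∏ i ∈ s, ((f i : Multiplicative ℤ) : ℤᵐ)) = (((∏ i ∈ s, f i : Multiplicative ℤ)) : ℤᵐ) := by
  classical
  induction s using Finset.induction with
  | empty => simp
  | @insert a s ha ih =>
    rw [Finset.prod_insert ha, Finset.prod_insert ha, ih, WithZero.coe_mul]

lemma v_prod {ι : Type*} (s : Finset ι) (f : ι → RatFunc.CompletionAtInfty Fq) :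
    Valued.v (∏ i ∈ s, f i) = ∏ i ∈ s, Valued.v (f i) :=
  map_prod Valued.v f s

lemma ofAdd_neg_one_lt_one : ((ofAdd (-1 : ℤ) : Multiplicative ℤ) : ℤᵐ) < 1 := by
  rw [show (1 : ℤᵐ) = ((ofAdd (0 : ℤ) : Multiplicative ℤ) : ℤᵐ) from rfl, coe_lt_coe]
  exact Multiplicative.ofAdd_lt.mpr (by norm_num)

lemma reduce {n : ℕ} (A : Matrix (Fin n) (Fin n) (RatFunc.CompletionAtInfty Fq)) (hA : A.det ≠ 0)
    (hgap : Valued.v A.det < ∏ j, Finset.univ.sup fun i => Valued.v (A i j)) :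
    ∃ A' : Matrix (Fin n) (Fin n) (RatFunc.CompletionAtInfty Fq),
      A'.det ≠ 0 ∧ Valued.v A'.det = Valued.v A.det ∧
      (∏ j, Finset.univ.sup fun i => Valued.v (A' i j)) ≤
        ((ofAdd (-1 : ℤ) : Multiplicative ℤ) : ℤᵐ) *
          (∏ j, Finset.univ.sup fun i => Valued.v (A i j)) ∧
      ((∃ u : Fin n → Polynomial Fq, u ≠ 0 ∧
          ∀ i, Valued.v (∑ j, A' i j * embP Fq (u j)) ≤ (1 : ℤᵐ)) →
       (∃ u : Fin n → Polynomial Fq, u ≠ 0 ∧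
          ∀ i, Valued.v (∑ j, A i j * embP Fq (u j)) ≤ (1 : ℤᵐ))) := by
  classical
  set γ : Fin n → ℤᵐ := fun j => Finset.univ.sup fun i => Valued.v (A i j) with hγdef
  have hcolnz : ∀ j, ∃ i, A i j ≠ 0 := by
    intro j
    by_contra h
    push_neg at h
    exact hA (Matrix.det_eq_zero_of_column_eq_zero j h)
  have hγ : ∀ j, γ j ≠ 0 := by
    intro j h0
    obtain ⟨i, hi⟩ := hcolnz j
    have h1 : Valued.v (A i j) ≤ γ j :=
      Finset.le_sup (f := fun i => Valued.v (A i j)) (Finset.mem_univ i)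
    rw [h0, le_zero_iff] at h1
    exact v_ne_zero hi h1
  set e : Fin n → ℤ := fun j => toAdd (unzero (hγ j)) with hedef
  have hγe : ∀ j, γ j = ((ofAdd (e j) : Multiplicative ℤ) : ℤᵐ) := by
    intro j
    rw [hedef]
    simp only [ofAdd_toAdd, coe_unzero]
  have hvA_le : ∀ i j, Valued.v (A i j) ≤ ((ofAdd (e j) : Multiplicative ℤ) : ℤᵐ) := fun i j => by
    rw [← hγe j]
    exact Finset.le_sup (f := fun i => Valued.v (A i j)) (Finset.mem_univ i)
  have hprodγ : (∏ j, γ j) = ((ofAdd (∑ j, e j) : Multiplicative ℤ) : ℤᵐ) := by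
    rw [Finset.prod_congr rfl fun j _ => hγe j, ofAdd_sum, coe_prod_zm]
  -- the residue matrix
  set B : Fin n → Fin n → RatFunc.CompletionAtInfty Fq := fun i j => A i j * tpow Fq (-(e j)) with hBdef
  have hvB : ∀ i j, Valued.v (B i j) ≤ (1 : ℤᵐ) := by
    intro i j
    rw [hBdef]
    calc Valued.v (A i j * tpow Fq (-(e j)))
        = Valued.v (A i j) * Valued.v (tpow Fq (-(e j))) := Valued.v.map_mul _ _
      _ ≤ ((ofAdd (e j) : Multiplicative ℤ) : ℤᵐ) * ((ofAdd (-(e j)) : Multiplicative ℤ) : ℤᵐ) := by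
          rw [v_tpow]
          exact mul_le_mul_left (hvA_le i j) _
      _ = 1 := by rw [← coe_mul, ← ofAdd_add]; simp
  set b : Fin n → Fin n → Fq := fun i j => (polyPart (B i j)).coeff 0 with hbdef
  have hb : ∀ i j, Valued.v (B i j - embP Fq (Polynomial.C (b i j))) < (1 : ℤᵐ) :=
    fun i j => resid_spec (hvB i j)
  have hvCb : ∀ i j, Valued.v (embP Fq (Polynomial.C (b i j))) ≤ (1 : ℤᵐ) :=
    fun i j => v_embP_le_one (Polynomial.natDegree_C _)
  -- determinant of B is small
  have hBmat : (Matrix.of B) = A * Matrix.diagonal (fun j => tpow Fq (-(e j))) := by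
    ext i j
    rw [Matrix.mul_diagonal]
    rfl
  have hdetB : Valued.v (Matrix.of B).det < (1 : ℤᵐ) := by
    rw [hBmat, Matrix.det_mul, Matrix.det_diagonal, Valued.v.map_mul]
    have hvd : Valued.v (∏ j, tpow Fq (-(e j))) =
        ((ofAdd (-∑ j, e j) : Multiplicative ℤ) : ℤᵐ) := by
      rw [v_prod]
      rw [Finset.prod_congr rfl fun j (_ : j ∈ Finset.univ) => v_tpow (Fq := Fq) (-(e j))]
      rw [coe_prod_zm]
      congr 1
      rw [← ofAdd_sum]
      congr 1
      rw [← Finset.sum_neg_distrib]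
    rw [hvd]
    have hne : ((ofAdd (-∑ j, e j) : Multiplicative ℤ) : ℤᵐ) ≠ 0 := coe_ne_zero
    have := mul_lt_mul_of_le_of_lt_of_nonneg_of_pos (le_refl ((ofAdd (-∑ j, e j) : Multiplicative ℤ) : ℤᵐ))
      (hprodγ ▸ hgap) zero_le' (pos_iff_ne_zero.mpr hne)
    calc Valued.v A.det * ((ofAdd (-∑ j, e j) : Multiplicative ℤ) : ℤᵐ)
        = ((ofAdd (-∑ j, e j) : Multiplicative ℤ) : ℤᵐ) * Valued.v A.det := mul_comm _ _
      _ < ((ofAdd (-∑ j, e j) : Multiplicative ℤ) : ℤᵐ) *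
          ((ofAdd (∑ j, e j) : Multiplicative ℤ) : ℤᵐ) := this
      _ = 1 := by rw [← coe_mul, ← ofAdd_add]; simp
  -- residue matrix is singular
  have hdetb : (Matrix.of b).det = 0 := by
    by_contra hne
    have hCb : Matrix.of (fun i j => embP Fq (Polynomial.C (b i j))) =
        (Matrix.of b).map ((embP Fq).comp Polynomial.C) := rfl
    have hdetY : (Matrix.of (fun i j => embP Fq (Polynomial.C (b i j)))).det =
        embP Fq (Polynomial.C (Matrix.of b).det) := by
      rw [hCb,
        show (Matrix.of b).map ⇑((embP Fq).comp Polynomial.C) =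
          ((embP Fq).comp Polynomial.C).mapMatrix (Matrix.of b) from rfl,
        ← RingHom.map_det]
      rfl
    have hsub := v_det_sub (Matrix.of B) (Matrix.of (fun i j => embP Fq (Polynomial.C (b i j))))
      (fun i j => hvB i j) (fun i j => hvCb i j) (fun i j => hb i j)
    have h1 : (1 : ℤᵐ) ≤ Valued.v ((Matrix.of (fun i j => embP Fq (Polynomial.C (b i j)))).det) := by
      rw [hdetY]
      exact one_le_v_embP (by simpa using hne)
    have h2 : Valued.v ((Matrix.of (fun i j => embP Fq (Polynomial.C (b i j)))).det) < 1 := by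
      have : (Matrix.of (fun i j => embP Fq (Polynomial.C (b i j)))).det =
          (Matrix.of B).det - ((Matrix.of B).det -
            (Matrix.of (fun i j => embP Fq (Polynomial.C (b i j)))).det) := by ring
      rw [this]
      exact lt_of_le_of_lt (Valuation.map_sub Valued.v _ _) (max_lt hdetB hsub)
    exact absurd (lt_of_le_of_lt h1 h2) (lt_irrefl _)
  obtain ⟨c, hc0, hcker⟩ := (Matrix.exists_mulVec_eq_zero_iff).mpr hdetb
  have hckereq : ∀ k, ∑ j, b k j * c j = 0 := by
    intro k
    have := congrFun hcker k
    simpa [Matrix.mulVec, dotProduct] using this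
  -- pick the pivot column
  set S : Finset (Fin n) := Finset.univ.filter (fun j => c j ≠ 0) with hSdef
  have hSne : S.Nonempty := by
    obtain ⟨j, hj⟩ := Function.ne_iff.mp hc0
    have hj' : c j ≠ 0 := by simpa using hj
    exact ⟨j, by simp [hSdef, hj']⟩
  obtain ⟨j0, hj0S, hj0max⟩ := S.exists_max_image e hSne
  have hcj0 : c j0 ≠ 0 := (Finset.mem_filter.mp hj0S).2
  have hemax : ∀ j, c j ≠ 0 → e j ≤ e j0 := fun j hj =>
    hj0max j (by simp [hSdef, hj])
  -- the new column
  set w : Fin n → Polynomial Fq := fun j => Polynomial.monomial (e j0 - e j).toNat (c j) with hwdef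
  set newcol : Fin n → RatFunc.CompletionAtInfty Fq := fun k => ∑ j, embP Fq (w j) * A k j with hncdef
  set A' : Matrix (Fin n) (Fin n) (RatFunc.CompletionAtInfty Fq) := A.updateCol j0 newcol with hA'def
  have hwj0 : w j0 = Polynomial.C (c j0) := by
    rw [hwdef]
    simp
  have hdet' : A'.det = embP Fq (Polynomial.C (c j0)) * A.det := by
    have : newcol = fun k => ∑ j, embP Fq (w j) • A k j := by
      funext k
      simp [hncdef, smul_eq_mul]
    rw [hA'def, this, Matrix.det_updateCol_sum A j0 (fun j => embP Fq (w j))]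
    rw [smul_eq_mul, hwj0]
  have hCcj0 : Valued.v (embP Fq (Polynomial.C (c j0))) = (1 : ℤᵐ) := by
    rw [v_embP (Polynomial.C_ne_zero.mpr hcj0), Polynomial.natDegree_C]
    rfl
  have hdet'ne : A'.det ≠ 0 := by
    rw [hdet']
    exact mul_ne_zero (fun h => by
      have := hCcj0
      rw [h, map_zero] at this
      exact zero_ne_one this) hA
  have hvdet' : Valued.v A'.det = Valued.v A.det := by
    rw [hdet', Valued.v.map_mul, hCcj0, one_mul]
  -- key identity for the new column
  have hterm : ∀ k j, embP Fq (w j) * A k j =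
      tpow Fq (e j0) * (embP Fq (Polynomial.C (c j)) * B k j) := by
    intro k j
    rcases eq_or_ne (c j) 0 with h0 | h0
    · rw [hwdef]
      simp [h0]
    · have hle : e j ≤ e j0 := hemax j h0
      have hmn : ((e j0 - e j).toNat : ℤ) = e j0 - e j := Int.toNat_of_nonneg (by omega)
      have hw : w j = Polynomial.C (c j) * Polynomial.X ^ (e j0 - e j).toNat := by
        rw [hwdef]
        exact (Polynomial.C_mul_X_pow_eq_monomial).symm
      rw [hw, map_mul, map_pow]
      have htp : (embP Fq Polynomial.X) ^ (e j0 - e j).toNat = tpow Fq (e j0 - e j) := by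
        conv_rhs => rw [← hmn]
        rw [tpow_natCast, map_pow]
      rw [htp, hBdef]
      have : tpow Fq (e j0 - e j) = tpow Fq (e j0) * tpow Fq (-(e j)) := by
        rw [sub_eq_add_neg, tpow_add]
      rw [this]
      ring
  have hnewcol_small : ∀ k, Valued.v (newcol k) ≤
      ((ofAdd (e j0 - 1) : Multiplicative ℤ) : ℤᵐ) := by
    intro k
    have hzero : ∑ j, embP Fq (Polynomial.C (c j)) * embP Fq (Polynomial.C (b k j)) = 0 := by
      calc ∑ j, embP Fq (Polynomial.C (c j)) * embP Fq (Polynomial.C (b k j))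
          = ∑ j, ((embP Fq).comp Polynomial.C) (b k j * c j) := by
            refine Finset.sum_congr rfl fun j _ => ?_
            rw [RingHom.comp_apply, Polynomial.C_mul, map_mul, mul_comm]
        _ = ((embP Fq).comp Polynomial.C) (∑ j, b k j * c j) := (map_sum _ _ _).symm
        _ = 0 := by rw [hckereq k]; simp
    have hsplit : newcol k = tpow Fq (e j0) *
        ∑ j, embP Fq (Polynomial.C (c j)) * (B k j - embP Fq (Polynomial.C (b k j))) := by
      have h1 : ∑ j, embP Fq (Polynomial.C (c j)) * (B k j - embP Fq (Polynomial.C (b k j))) =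
          ∑ j, embP Fq (Polynomial.C (c j)) * B k j := by
        rw [Finset.sum_congr rfl fun j _ =>
          mul_sub (embP Fq (Polynomial.C (c j))) (B k j) (embP Fq (Polynomial.C (b k j)))]
        rw [Finset.sum_sub_distrib, hzero, sub_zero]
      rw [h1, hncdef]
      simp only []
      rw [Finset.sum_congr rfl fun j _ => hterm k j, ← Finset.mul_sum]
    rw [hsplit, Valued.v.map_mul, v_tpow]
    have hs : Valued.v (∑ j, embP Fq (Polynomial.C (c j)) *
        (B k j - embP Fq (Polynomial.C (b k j)))) ≤
        ((ofAdd (-1 : ℤ) : Multiplicative ℤ) : ℤᵐ) := by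
      refine Valued.v.map_sum_le fun j _ => ?_
      refine lt_one_le ?_
      rw [Valued.v.map_mul]
      calc Valued.v (embP Fq (Polynomial.C (c j))) *
          Valued.v (B k j - embP Fq (Polynomial.C (b k j)))
          ≤ 1 * Valued.v (B k j - embP Fq (Polynomial.C (b k j))) :=
            mul_le_mul_left (v_embP_le_one (Polynomial.natDegree_C _)) _
        _ < 1 := by rw [one_mul]; exact hb k j
    calc ((ofAdd (e j0) : Multiplicative ℤ) : ℤᵐ) * Valued.v (∑ j, embP Fq (Polynomial.C (c j)) *
        (B k j - embP Fq (Polynomial.C (b k j))))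
        ≤ ((ofAdd (e j0) : Multiplicative ℤ) : ℤᵐ) * ((ofAdd (-1 : ℤ) : Multiplicative ℤ) : ℤᵐ) :=
          mul_le_mul_right hs _
      _ = ((ofAdd (e j0 - 1) : Multiplicative ℤ) : ℤᵐ) := by
          rw [← coe_mul, ← ofAdd_add, ← sub_eq_add_neg]
  -- product of column degrees decreases
  have hprod' : (∏ j, Finset.univ.sup fun i => Valued.v (A' i j)) ≤
      ((ofAdd (-1 : ℤ) : Multiplicative ℤ) : ℤᵐ) * ∏ j, γ j := by
    have hγ'eq : ∀ j, j ≠ j0 → (Finset.univ.sup fun i => Valued.v (A' i j)) = γ j := by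
      intro j hj
      rw [hγdef]
      refine Finset.sup_congr rfl fun i _ => ?_
      rw [hA'def, Matrix.updateCol_ne hj]
    have hγ'j0 : (Finset.univ.sup fun i => Valued.v (A' i j0)) ≤
        ((ofAdd (e j0 - 1) : Multiplicative ℤ) : ℤᵐ) := by
      refine Finset.sup_le fun i _ => ?_
      rw [hA'def, Matrix.updateCol_self]
      exact hnewcol_small i
    rw [← Finset.mul_prod_erase Finset.univ _ (Finset.mem_univ j0),
        ← Finset.mul_prod_erase Finset.univ γ (Finset.mem_univ j0), ← mul_assoc]
    refine mul_le_mul' ?_ ?_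
    · calc (Finset.univ.sup fun i => Valued.v (A' i j0))
          ≤ ((ofAdd (e j0 - 1) : Multiplicative ℤ) : ℤᵐ) := hγ'j0
        _ = ((ofAdd (-1 : ℤ) : Multiplicative ℤ) : ℤᵐ) * γ j0 := by
            rw [hγe j0, ← coe_mul, ← ofAdd_add]
            congr 2
            ring
    · refine le_of_eq (Finset.prod_congr rfl fun j hj => ?_)
      exact hγ'eq j (Finset.ne_of_mem_erase hj)
  -- transfer of solutions
  refine ⟨A', hdet'ne, hvdet', hprod', ?_⟩
  rintro ⟨u', hu'0, hu'⟩
  set u : Fin n → Polynomial Fq :=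
    fun k => (if k = j0 then 0 else u' k) + w k * u' j0 with hudef
  have hsums : ∀ i, ∑ j, A i j * embP Fq (u j) = ∑ j, A' i j * embP Fq (u' j) := by
    intro i
    have hRHS : ∑ j, A' i j * embP Fq (u' j) =
        (∑ j ∈ Finset.univ.erase j0, A i j * embP Fq (u' j)) + newcol i * embP Fq (u' j0) := by
      rw [← Finset.sum_erase_add Finset.univ _ (Finset.mem_univ j0)]
      congr 1
      · refine Finset.sum_congr rfl fun j hj => ?_
        rw [hA'def, Matrix.updateCol_ne (Finset.ne_of_mem_erase hj)]
      · rw [hA'def, Matrix.updateCol_self]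
    have hLHS : ∑ j, A i j * embP Fq (u j) =
        (∑ j ∈ Finset.univ.erase j0, A i j * embP Fq (u' j)) +
          (∑ j, A i j * embP Fq (w j * u' j0)) := by
      rw [← Finset.sum_erase_add Finset.univ (fun j => A i j * embP Fq (u j))
        (Finset.mem_univ j0)]
      rw [← Finset.sum_erase_add Finset.univ (fun j => A i j * embP Fq (w j * u' j0))
        (Finset.mem_univ j0)]
      have hj0term : A i j0 * embP Fq (u j0) = A i j0 * embP Fq (w j0 * u' j0) := by
        rw [hudef]
        simp
      rw [hj0term]
      rw [← add_assoc]
      congr 1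
      rw [← Finset.sum_add_distrib]
      refine Finset.sum_congr rfl fun j hj => ?_
      have hjne : j ≠ j0 := Finset.ne_of_mem_erase hj
      rw [hudef]
      simp only [if_neg hjne]
      rw [map_add, mul_add]
    have hnc : ∑ j, A i j * embP Fq (w j * u' j0) = newcol i * embP Fq (u' j0) := by
      rw [hncdef]
      simp only []
      rw [Finset.sum_mul]
      refine Finset.sum_congr rfl fun j _ => ?_
      rw [map_mul]
      ring
    rw [hLHS, hnc, hRHS]
  refine ⟨u, ?_, fun i => by rw [hsums i]; exact hu' i⟩
  rcases eq_or_ne (u' j0) 0 with h0 | h0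
  · have : u = u' := by
      funext k
      rw [hudef]
      simp only [h0, mul_zero, add_zero]
      by_cases hk : k = j0
      · rw [if_pos hk, hk, h0]
      · rw [if_neg hk]
    rw [this]
    exact hu'0
  · intro h
    have huj0 : u j0 = 0 := congrFun h j0
    have h1 : u j0 = Polynomial.C (c j0) * u' j0 := by
      rw [hudef]
      simp [hwj0]
    rw [h1] at huj0
    exact (mul_ne_zero (Polynomial.C_ne_zero.mpr hcj0) h0) huj0

lemma colnz {n : ℕ} (A : Matrix (Fin n) (Fin n) (RatFunc.CompletionAtInfty Fq)) (hA : A.det ≠ 0) :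
    ∀ j, ∃ i, A i j ≠ 0 := by
  intro j
  by_contra h
  push_neg at h
  exact hA (Matrix.det_eq_zero_of_column_eq_zero j h)

lemma lt_coe_le {x : ℤᵐ} {k : ℤ} (h : x < ((ofAdd k : Multiplicative ℤ) : ℤᵐ)) :
    x ≤ ((ofAdd (k - 1) : Multiplicative ℤ) : ℤᵐ) := by
  induction x using WithZero.recZeroCoe with
  | zero => exact zero_le'
  | coe u =>
    rw [coe_le_coe]
    rw [coe_lt_coe] at h
    have h1 : toAdd u < k := Multiplicative.ofAdd_lt.mp (by simpa using h)
    have h2 : toAdd u ≤ k - 1 := by omega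
    exact Multiplicative.ofAdd_le.mpr h2 |>.trans_eq (by simp)

lemma key {n : ℕ} (hn : 0 < n) : ∀ (N : ℕ) (A : Matrix (Fin n) (Fin n) (RatFunc.CompletionAtInfty Fq)),
    A.det ≠ 0 →
    Valued.v A.det ≤ ((ofAdd ((n : ℤ) - 1) : Multiplicative ℤ) : ℤᵐ) →
    (∏ j, Finset.univ.sup fun i => Valued.v (A i j)) ≤
      ((ofAdd ((n : ℤ) - 1 + N) : Multiplicative ℤ) : ℤᵐ) →
    ∃ u : Fin n → Polynomial Fq, u ≠ 0 ∧
      ∀ i, Valued.v (∑ j, A i j * embP Fq (u j)) ≤ (1 : ℤᵐ) := by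
  intro N
  induction N with
  | zero =>
    intro A hA hdet hcol
    refine direct hn A (colnz A hA) ?_
    have heq : (n : ℤ) - 1 + ((0 : ℕ) : ℤ) = (n : ℤ) - 1 := by push_cast; ring
    rwa [heq] at hcol
  | succ N ih =>
    intro A hA hdet hcol
    by_cases hc : (∏ j, Finset.univ.sup fun i => Valued.v (A i j)) ≤
        ((ofAdd ((n : ℤ) - 1) : Multiplicative ℤ) : ℤᵐ)
    · exact direct hn A (colnz A hA) hc
    · push_neg at hc
      have hgap : Valued.v A.det < ∏ j, Finset.univ.sup fun i => Valued.v (A i j) :=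
        lt_of_le_of_lt hdet hc
      obtain ⟨A', h1, h2, h3, h4⟩ := reduce A hA hgap
      refine h4 (ih A' h1 (h2 ▸ hdet) ?_)
      calc (∏ j, Finset.univ.sup fun i => Valued.v (A' i j))
          ≤ ((ofAdd (-1 : ℤ) : Multiplicative ℤ) : ℤᵐ) *
            (∏ j, Finset.univ.sup fun i => Valued.v (A i j)) := h3
        _ ≤ ((ofAdd (-1 : ℤ) : Multiplicative ℤ) : ℤᵐ) *
            ((ofAdd ((n : ℤ) - 1 + (N + 1 : ℕ)) : Multiplicative ℤ) : ℤᵐ) :=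
            mul_le_mul_right hcol _
        _ = ((ofAdd ((n : ℤ) - 1 + N) : Multiplicative ℤ) : ℤᵐ) := by
            rw [← coe_mul, ← ofAdd_add]
            congr 2
            push_cast
            ring

lemma key' {n : ℕ} (hn : 0 < n) (A : Matrix (Fin n) (Fin n) (RatFunc.CompletionAtInfty Fq)) (hA : A.det ≠ 0)
    (hdet : Valued.v A.det ≤ ((ofAdd ((n : ℤ) - 1) : Multiplicative ℤ) : ℤᵐ)) :
    ∃ u : Fin n → Polynomial Fq, u ≠ 0 ∧
      ∀ i, Valued.v (∑ j, A i j * embP Fq (u j)) ≤ (1 : ℤᵐ) := by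
  classical
  set γ : Fin n → ℤᵐ := fun j => Finset.univ.sup fun i => Valued.v (A i j) with hγdef
  have hγ : ∀ j, γ j ≠ 0 := by
    intro j h0
    obtain ⟨i, hi⟩ := colnz A hA j
    have h1 : Valued.v (A i j) ≤ γ j :=
      Finset.le_sup (f := fun i => Valued.v (A i j)) (Finset.mem_univ i)
    rw [h0, le_zero_iff] at h1
    exact v_ne_zero hi h1
  set e : Fin n → ℤ := fun j => toAdd (unzero (hγ j)) with hedef
  have hγe : ∀ j, γ j = ((ofAdd (e j) : Multiplicative ℤ) : ℤᵐ) := by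
    intro j
    rw [hedef]
    simp only [ofAdd_toAdd, coe_unzero]
  have hprodγ : (∏ j, γ j) = ((ofAdd (∑ j, e j) : Multiplicative ℤ) : ℤᵐ) := by
    rw [Finset.prod_congr rfl fun j _ => hγe j, ofAdd_sum, coe_prod_zm]
  set N : ℕ := (∑ j, e j - ((n : ℤ) - 1)).toNat with hNdef
  refine key hn N A hA hdet ?_
  rw [hprodγ, coe_le_coe]
  refine Multiplicative.ofAdd_le.mpr ?_
  have := Int.self_le_toNat (∑ j, e j - ((n : ℤ) - 1))
  omega

lemma vabs_le_zpow_iff {α : RatFunc.CompletionAtInfty Fq} {m : ℤ} :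
    vabs Fq α ≤ (Fintype.card Fq : ℝ) ^ m ↔
      Valued.v α ≤ ((ofAdd m : Multiplicative ℤ) : ℤᵐ) := by
  have hq1 : (1 : ℝ) < (Fintype.card Fq : ℝ) := by exact_mod_cast Fintype.one_lt_card
  rcases eq_or_ne α 0 with h0 | h0
  · subst h0
    have h1 : vabs Fq (0 : RatFunc.CompletionAtInfty Fq) = 0 := by
      rw [vabs, dif_pos (map_zero _)]
    rw [h1, map_zero]
    constructor
    · intro _
      exact zero_le'
    · intro _
      positivity
  · have hv := v_ne_zero h0
    rw [vabs, dif_neg hv]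
    rw [zpow_le_zpow_iff_right₀ hq1]
    constructor
    · intro h
      have : Valued.v α = ((unzero hv : Multiplicative ℤ) : ℤᵐ) := (coe_unzero hv).symm
      rw [this, coe_le_coe]
      exact Multiplicative.toAdd_le.mp (by simpa using h)
    · intro h
      have : Valued.v α = ((unzero hv : Multiplicative ℤ) : ℤᵐ) := (coe_unzero hv).symm
      rw [this, coe_le_coe] at h
      exact Multiplicative.toAdd_le.mpr h

lemma v_lt_of_vabs_lt {α : RatFunc.CompletionAtInfty Fq} {m : ℤ}
    (h : vabs Fq α < (Fintype.card Fq : ℝ) ^ m) :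
    Valued.v α < ((ofAdd m : Multiplicative ℤ) : ℤᵐ) := by
  have hq1 : (1 : ℝ) < (Fintype.card Fq : ℝ) := by exact_mod_cast Fintype.one_lt_card
  rcases eq_or_ne α 0 with h0 | h0
  · subst h0
    rw [map_zero]
    exact zero_lt_coe _
  · have hv := v_ne_zero h0
    rw [vabs, dif_neg hv] at h
    rw [zpow_lt_zpow_iff_right₀ hq1] at h
    have : Valued.v α = ((unzero hv : Multiplicative ℤ) : ℤᵐ) := (coe_unzero hv).symm
    rw [this, coe_lt_coe]
    exact Multiplicative.toAdd_lt.mp (by simpa using h)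

end MinkAux

open MinkAux

/-- Minkowski's linear forms theorem for function fields.  The hypothesis
`|det A| < q^(n - ∑ r i)` is the multiplicative form of `r₁ + ⋯ + rₙ < v(det A) + n`,
and the conclusion `|Lᵢ(u)| ≤ q^(-rᵢ)` is the multiplicative form of `v(Lᵢ(u)) ≥ rᵢ`. -/
theorem stmt5 (n : ℕ) (A : Matrix (Fin n) (Fin n) (RatFunc.CompletionAtInfty Fq)) (hA : A.det ≠ 0)
    (r : Fin n → ℤ) (hr : vabs Fq A.det < (Fintype.card Fq : ℝ) ^ ((n : ℤ) - ∑ i, r i)) :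
    ∃ u : Fin n → Polynomial Fq, u ≠ 0 ∧
      ∀ i, vabs Fq (∑ j, A i j * embP Fq (u j)) ≤ (Fintype.card Fq : ℝ) ^ (-(r i)) := by
  classical
  have hvdet : Valued.v A.det <
      ((ofAdd ((n : ℤ) - ∑ i, r i) : Multiplicative ℤ) : WithZero (Multiplicative ℤ)) :=
    v_lt_of_vabs_lt hr
  rcases Nat.eq_zero_or_pos n with hn0 | hn
  · exfalso
    subst hn0
    rw [Matrix.det_fin_zero, map_one] at hvdet
    have h0 : ((0 : ℕ) : ℤ) - ∑ i : Fin 0, r i = 0 := by simp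
    rw [h0] at hvdet
    exact absurd hvdet (by simp)
  · set A'' : Matrix (Fin n) (Fin n) (RatFunc.CompletionAtInfty Fq) :=
      Matrix.of fun i j => tpow Fq (r i) * A i j with hA''def
    have hA''diag : A'' = Matrix.diagonal (fun i => tpow Fq (r i)) * A := by
      ext i j
      rw [Matrix.diagonal_mul]
      rfl
    have hdet'' : A''.det = (∏ i, tpow Fq (r i)) * A.det := by
      rw [hA''diag, Matrix.det_mul, Matrix.det_diagonal]
    have hprodne : (∏ i, tpow Fq (r i)) ≠ 0 :=
      Finset.prod_ne_zero_iff.mpr fun i _ => tpow_ne_zero (r i)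
    have hA''ne : A''.det ≠ 0 := by
      rw [hdet'']
      exact mul_ne_zero hprodne hA
    have hvprod : Valued.v (∏ i, tpow Fq (r i)) =
        ((ofAdd (∑ i, r i) : Multiplicative ℤ) : WithZero (Multiplicative ℤ)) := by
      rw [v_prod]
      rw [Finset.prod_congr rfl fun i (_ : i ∈ Finset.univ) => v_tpow (Fq := Fq) (r i)]
      rw [coe_prod_zm, ← ofAdd_sum]
    have hvdet'' : Valued.v A''.det ≤
        ((ofAdd ((n : ℤ) - 1) : Multiplicative ℤ) : WithZero (Multiplicative ℤ)) := by
      have hlt : Valued.v A''.det <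
          ((ofAdd (n : ℤ) : Multiplicative ℤ) : WithZero (Multiplicative ℤ)) := by
        rw [hdet'', Valued.v.map_mul, hvprod]
        have := mul_lt_mul_of_le_of_lt_of_nonneg_of_pos
          (le_refl ((ofAdd (∑ i, r i) : Multiplicative ℤ) : WithZero (Multiplicative ℤ)))
          hvdet zero_le' (pos_iff_ne_zero.mpr coe_ne_zero)
        calc ((ofAdd (∑ i, r i) : Multiplicative ℤ) : WithZero (Multiplicative ℤ)) *
            Valued.v A.det
            < ((ofAdd (∑ i, r i) : Multiplicative ℤ) : WithZero (Multiplicative ℤ)) *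
              ((ofAdd ((n : ℤ) - ∑ i, r i) : Multiplicative ℤ) : WithZero (Multiplicative ℤ)) :=
              this
          _ = ((ofAdd (n : ℤ) : Multiplicative ℤ) : WithZero (Multiplicative ℤ)) := by
              rw [← WithZero.coe_mul, ← ofAdd_add]
              congr 2
              ring
      exact lt_coe_le hlt
    obtain ⟨u, hu0, hu⟩ := key' hn A'' hA''ne hvdet''
    refine ⟨u, hu0, fun i => ?_⟩
    rw [vabs_le_zpow_iff]
    have hsum : (∑ j, A i j * embP Fq (u j)) =
        tpow Fq (-(r i)) * ∑ j, A'' i j * embP Fq (u j) := by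
      rw [hA''def]
      simp only [Matrix.of_apply]
      rw [Finset.mul_sum]
      refine Finset.sum_congr rfl fun j _ => ?_
      rw [← mul_assoc, ← mul_assoc, ← tpow_add]
      rw [show -(r i) + r i = 0 by ring, tpow_zero, one_mul]
    rw [hsum, Valued.v.map_mul, v_tpow]
    calc ((ofAdd (-(r i)) : Multiplicative ℤ) : WithZero (Multiplicative ℤ)) *
        Valued.v (∑ j, A'' i j * embP Fq (u j))
        ≤ ((ofAdd (-(r i)) : Multiplicative ℤ) : WithZero (Multiplicative ℤ)) * 1 :=
          mul_le_mul_right (hu i) _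
      _ = ((ofAdd (-(r i)) : Multiplicative ℤ) : WithZero (Multiplicative ℤ)) := mul_one _
end

section
/- (Dirichlet's theorem in function fields) For any θ ∈ k_∞ and H ∈ k_∞ with |H| ≥ q, there exists a nonzero polynomial x ∈ K such that ‖xθ‖ ≤ 1/|H| and 1 ≤ |x| < |H|. -/
open FunctionField Multiplicative WithZero

variable (Fq : Type) [Field Fq] [Fintype Fq] [DecidableEq (RatFunc Fq)]

set_option linter.unusedSectionVars false

lemma v_embR (g : RatFunc Fq) : Valued.v (embR Fq g) = RatFunc.inftyValuationDef Fq g :=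
  @Valued.valuedCompletion_apply (RatFunc Fq) _ _ _ (RatFunc.inftyValued Fq) g

lemma vabs_nonneg (α : RatFunc.CompletionAtInfty Fq) : 0 ≤ vabs Fq α := by
  unfold vabs; split
  · exact le_refl 0
  · positivity

lemma one_lt_qr : 1 < (Fintype.card Fq : ℝ) := by
  exact_mod_cast Fintype.one_lt_card

lemma vabs_eq_pow {α : RatFunc.CompletionAtInfty Fq} {k : ℤ}
    (h : Valued.v α = ((ofAdd k : Multiplicative ℤ) : WithZero (Multiplicative ℤ))) :
    vabs Fq α = (Fintype.card Fq : ℝ) ^ k := by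
  have h0 : Valued.v α ≠ 0 := by rw [h]; exact coe_ne_zero
  rw [vabs, dif_neg h0]
  congr 1
  have : ((unzero h0 : Multiplicative ℤ) : WithZero (Multiplicative ℤ)) = ofAdd k := by
    rw [coe_unzero]; exact h
  exact_mod_cast congrArg toAdd (WithZero.coe_inj.mp this)

lemma vabs_le_pow {α : RatFunc.CompletionAtInfty Fq} {k : ℤ}
    (h : Valued.v α ≤ ((ofAdd k : Multiplicative ℤ) : WithZero (Multiplicative ℤ))) :
    vabs Fq α ≤ (Fintype.card Fq : ℝ) ^ k := by
  by_cases h0 : Valued.v α = 0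
  · rw [vabs, dif_pos h0]; positivity
  · rw [vabs, dif_neg h0]
    have hle : toAdd (unzero h0) ≤ k := by
      have : ((unzero h0 : Multiplicative ℤ) : WithZero (Multiplicative ℤ)) ≤ ofAdd k := by
        rw [coe_unzero]; exact h
      exact_mod_cast WithZero.coe_le_coe.mp this
    exact zpow_le_zpow_right₀ (one_lt_qr Fq).le hle

lemma exists_small_rem (P Q : Polynomial Fq) (hQ : Q.Monic) (n : ℕ) (hn : 1 ≤ n) :
    ∃ x : Polynomial Fq, x ≠ 0 ∧ x.degree < n ∧
      ((x * P) %ₘ Q = 0 ∨ ((x * P) %ₘ Q).natDegree + n ≤ Q.natDegree) := by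
  classical
  set L : Polynomial Fq →ₗ[Fq] (Fin (n - 1) → Fq) :=
    LinearMap.pi fun i => (Polynomial.lcoeff Fq (Q.natDegree - 1 - (i : ℕ))).comp
      ((Polynomial.modByMonicHom Q).comp (LinearMap.mulRight Fq P)) with hL
  set e := Polynomial.degreeLTEquiv Fq n with he
  have hcard : Fintype.card (Fin (n - 1) → Fq) < Fintype.card (Fin n → Fq) := by
    simp only [Fintype.card_pi, Finset.prod_const, Finset.card_univ, Fintype.card_fin]
    exact Nat.pow_lt_pow_right Fintype.one_lt_card (by omega)
  obtain ⟨a, b, hab, hgab⟩ :=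
    Fintype.exists_ne_map_eq_of_card_lt (fun w : Fin n → Fq => L ((e.symm w : _) : Polynomial Fq))
      hcard
  set x : Polynomial Fq := ((e.symm a : _) : Polynomial Fq) - ((e.symm b : _) : Polynomial Fq)
    with hx
  have hxne : x ≠ 0 := by
    rw [hx, sub_ne_zero]
    intro h
    exact hab (e.symm.injective (Subtype.coe_injective h))
  have hxdeg : x.degree < n := by
    have hmem : x ∈ Polynomial.degreeLT Fq n := by
      rw [hx]
      exact Submodule.sub_mem _ (e.symm a).2 (e.symm b).2
    exact Polynomial.mem_degreeLT.mp hmem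
  have hLx : L x = 0 := by
    rw [hx, map_sub, hgab, sub_self]
  refine ⟨x, hxne, hxdeg, ?_⟩
  set R := (x * P) %ₘ Q with hR
  have hcoeff : ∀ j : ℕ, Q.natDegree < j + n → R.coeff j = 0 := by
    intro j hj
    by_cases hjQ : j < Q.natDegree
    · have hi : Q.natDegree - 1 - j < n - 1 := by omega
      have := congrFun hLx ⟨Q.natDegree - 1 - j, hi⟩
      simp only [hL, LinearMap.pi_apply, LinearMap.comp_apply, Polynomial.lcoeff_apply,
        Polynomial.modByMonicHom_apply, LinearMap.mulRight_apply, Pi.zero_apply] at this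
      have hjj : Q.natDegree - 1 - (Q.natDegree - 1 - j) = j := by omega
      rwa [hjj] at this
    · apply Polynomial.coeff_eq_zero_of_degree_lt
      calc R.degree < Q.degree := Polynomial.degree_modByMonic_lt _ hQ
        _ ≤ (j : WithBot ℕ) := by
            rw [Polynomial.degree_eq_natDegree hQ.ne_zero]
            exact_mod_cast Nat.le_of_not_lt hjQ
  by_cases hR0 : R = 0
  · exact Or.inl hR0
  · refine Or.inr ?_
    by_contra hcon
    exact hR0 (Polynomial.leadingCoeff_eq_zero.mp (hcoeff R.natDegree (by omega)))

lemma exists_close (θ : RatFunc.CompletionAtInfty Fq) (γ : (WithZero (Multiplicative ℤ))ˣ) :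
    ∃ f : RatFunc Fq, Valued.v (embR Fq f - θ) < (γ : WithZero (Multiplicative ℤ)) := by
  letI := RatFunc.inftyValued Fq
  have hd : DenseRange (embR Fq) :=
    (UniformSpace.Completion.denseRange_coe (α := RatFunc Fq))
  have hmem : {y : RatFunc.CompletionAtInfty Fq | Valued.v (y - θ) < (γ : WithZero (Multiplicative ℤ))} ∈ nhds θ :=
    by
      obtain ⟨a, ha⟩ := WithZero.ne_zero_iff_exists.mp γ.ne_zero
      have hvt : Valued.v (embR Fq (RatFunc.X ^ (toAdd a))) = (γ : WithZero (Multiplicative ℤ)) := by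
        rw [v_embR, ← RatFunc.inftyValuation_apply, RatFunc.inftyValuation.X_zpow, ← ha]; rfl
      have hne : (Valued.v : Valuation (RatFunc.CompletionAtInfty Fq) (WithZero (Multiplicative ℤ))).restrict
          (embR Fq (RatFunc.X ^ (toAdd a))) ≠ 0 :=
        ((Valuation.restrict_pos_iff _ _).mpr (by rw [hvt]; exact zero_lt_iff.mpr γ.ne_zero)).ne'
      refine Valued.mem_nhds.mpr ⟨Units.mk0 _ hne, fun y hy => ?_⟩
      simp only [Set.mem_setOf_eq, Units.val_mk0] at hy ⊢
      rw [Valuation.restrict_lt_iff, hvt] at hy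
      exact hy
  obtain ⟨y, hy1, f, rfl⟩ := mem_closure_iff_nhds.mp (hd θ) _ hmem
  exact ⟨f, hy1⟩

set_option maxHeartbeats 1000000

theorem stmt6 (θ H : RatFunc.CompletionAtInfty Fq) (hH : (Fintype.card Fq : ℝ) ≤ vabs Fq H) :
    ∃ x : Polynomial Fq, x ≠ 0 ∧ pnorm Fq (embP Fq x * θ) ≤ (vabs Fq H)⁻¹ ∧
      1 ≤ vabs Fq (embP Fq x) ∧ vabs Fq (embP Fq x) < vabs Fq H := by
  classical
  have hq1 : (1 : ℝ) < (Fintype.card Fq : ℝ) := one_lt_qr Fq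
  have hH0 : Valued.v H ≠ 0 := by
    intro h
    rw [vabs, dif_pos h] at hH
    linarith
  set m : ℤ := toAdd (unzero hH0) with hm
  have hvH : vabs Fq H = (Fintype.card Fq : ℝ) ^ m := by rw [vabs, dif_neg hH0]
  have hm1 : 1 ≤ m := by
    rw [hvH] at hH
    exact (zpow_le_zpow_iff_right₀ hq1).mp (by rw [zpow_one]; exact hH)
  set n : ℕ := m.toNat with hn
  have hnm : (n : ℤ) = m := Int.toNat_of_nonneg (by omega)
  have hn1 : 1 ≤ n := by omega
  obtain ⟨f, hf⟩ := exists_close Fq θ (Units.mk0 ((ofAdd (-(2 * m)) : Multiplicative ℤ) :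
    WithZero (Multiplicative ℤ)) coe_ne_zero)
  set N := f.num with hN
  set D := f.denom with hD'
  have hD : D.Monic := f.monic_denom
  obtain ⟨x, hxne, hxdeg, hrem⟩ := exists_small_rem Fq N D hD n hn1
  set A := (x * N) /ₘ D with hA
  set R := (x * N) %ₘ D with hRdef
  -- facts about x
  have hvx : Valued.v (embP Fq x) = ((ofAdd (x.natDegree : ℤ) : Multiplicative ℤ) :
      WithZero (Multiplicative ℤ)) := by
    rw [embP, RingHom.comp_apply, v_embR, RatFunc.inftyValuation.polynomial Fq hxne,
      WithZero.exp_eq_coe_ofAdd]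
  have hdegx : (x.natDegree : ℤ) ≤ m - 1 := by
    have h1 : x.natDegree < n := by
      rwa [← Polynomial.natDegree_lt_iff_degree_lt hxne] at hxdeg
    omega
  -- second term: x * f - A is R / D
  have hDne : (algebraMap (Polynomial Fq) (RatFunc Fq)) D ≠ 0 :=
    RatFunc.algebraMap_ne_zero f.denom_ne_zero
  have hxN : R + D * A = x * N := Polynomial.modByMonic_add_div _ D
  have hratid : algebraMap (Polynomial Fq) (RatFunc Fq) x * f
      - algebraMap (Polynomial Fq) (RatFunc Fq) A
      = algebraMap (Polynomial Fq) (RatFunc Fq) R / algebraMap (Polynomial Fq) (RatFunc Fq) D := by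
    have h2 := congrArg (algebraMap (Polynomial Fq) (RatFunc Fq)) hxN
    rw [map_add, map_mul, map_mul] at h2
    have hfeq : f = algebraMap (Polynomial Fq) (RatFunc Fq) N
        / algebraMap (Polynomial Fq) (RatFunc Fq) D := (RatFunc.num_div_denom f).symm
    rw [hfeq, eq_div_iff hDne, sub_mul, mul_assoc,
      div_mul_cancel₀ _ hDne, ← h2]
    ring
  -- valuation bound on the error
  have key : Valued.v (embP Fq x * θ - embP Fq A) ≤
      ((ofAdd (-m) : Multiplicative ℤ) : WithZero (Multiplicative ℤ)) := by
    have hsplit : embP Fq x * θ - embP Fq A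
        = embP Fq x * (θ - embR Fq f)
          + embR Fq (algebraMap (Polynomial Fq) (RatFunc Fq) x * f
            - algebraMap (Polynomial Fq) (RatFunc Fq) A) := by
      rw [map_sub, map_mul]
      rw [show embR Fq (algebraMap (Polynomial Fq) (RatFunc Fq) x) = embP Fq x from rfl,
        show embR Fq (algebraMap (Polynomial Fq) (RatFunc Fq) A) = embP Fq A from rfl]
      ring
    have hterm1 : Valued.v (embP Fq x * (θ - embR Fq f)) ≤
        ((ofAdd (-m) : Multiplicative ℤ) : WithZero (Multiplicative ℤ)) := by
      rw [Valuation.map_mul, hvx]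
      have h3 : Valued.v (θ - embR Fq f) ≤
          ((ofAdd (-(2 * m)) : Multiplicative ℤ) : WithZero (Multiplicative ℤ)) := by
        have := hf.le
        rwa [Valuation.map_sub_swap] at this
      calc ((ofAdd (x.natDegree : ℤ) : Multiplicative ℤ) : WithZero (Multiplicative ℤ))
            * Valued.v (θ - embR Fq f)
          ≤ ((ofAdd (x.natDegree : ℤ) : Multiplicative ℤ) : WithZero (Multiplicative ℤ))
            * ((ofAdd (-(2 * m)) : Multiplicative ℤ) : WithZero (Multiplicative ℤ)) :=
            mul_le_mul_right h3 _
        _ = ((ofAdd ((x.natDegree : ℤ) + -(2 * m)) : Multiplicative ℤ) :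
            WithZero (Multiplicative ℤ)) := by
            rw [← WithZero.coe_mul, ← ofAdd_add]
        _ ≤ ((ofAdd (-m) : Multiplicative ℤ) : WithZero (Multiplicative ℤ)) := by
            rw [WithZero.coe_le_coe, Multiplicative.ofAdd_le]
            omega
    have hterm2 : Valued.v (embR Fq (algebraMap (Polynomial Fq) (RatFunc Fq) x * f
        - algebraMap (Polynomial Fq) (RatFunc Fq) A)) ≤
        ((ofAdd (-m) : Multiplicative ℤ) : WithZero (Multiplicative ℤ)) := by
      rw [hratid]
      by_cases hR0 : R = 0
      · rw [hR0, map_zero, zero_div, map_zero, map_zero]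
        exact zero_le'
      · have hRdeg : R.natDegree + n ≤ D.natDegree := hrem.resolve_left hR0
        rw [v_embR, ← RatFunc.inftyValuation_apply, map_div₀, RatFunc.inftyValuation_apply,
          RatFunc.inftyValuation_apply, RatFunc.inftyValuation.polynomial Fq hR0,
          RatFunc.inftyValuation.polynomial Fq hD.ne_zero, WithZero.exp_eq_coe_ofAdd,
          WithZero.exp_eq_coe_ofAdd, ← WithZero.coe_div, ← ofAdd_sub,
          WithZero.coe_le_coe, Multiplicative.ofAdd_le]
        omega
    calc Valued.v (embP Fq x * θ - embP Fq A) ≤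
        max (Valued.v (embP Fq x * (θ - embR Fq f)))
          (Valued.v (embR Fq (algebraMap (Polynomial Fq) (RatFunc Fq) x * f
            - algebraMap (Polynomial Fq) (RatFunc Fq) A))) := by
          rw [hsplit]; exact Valuation.map_add _ _ _
      _ ≤ ((ofAdd (-m) : Multiplicative ℤ) : WithZero (Multiplicative ℤ)) :=
          max_le hterm1 hterm2
  refine ⟨x, hxne, ?_, ?_, ?_⟩
  · have hbdd : BddBelow (Set.range fun B : Polynomial Fq =>
        vabs Fq (embP Fq x * θ - embP Fq B)) := by
      refine ⟨0, ?_⟩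
      rintro y ⟨B, rfl⟩
      exact vabs_nonneg Fq _
    calc pnorm Fq (embP Fq x * θ) ≤ vabs Fq (embP Fq x * θ - embP Fq A) := ciInf_le hbdd A
      _ ≤ (Fintype.card Fq : ℝ) ^ (-m) := vabs_le_pow Fq key
      _ = (vabs Fq H)⁻¹ := by rw [hvH, zpow_neg]
  · rw [vabs_eq_pow Fq hvx]
    calc (1 : ℝ) = (Fintype.card Fq : ℝ) ^ (0 : ℤ) := (zpow_zero _).symm
      _ ≤ (Fintype.card Fq : ℝ) ^ (x.natDegree : ℤ) :=
          zpow_le_zpow_right₀ hq1.le (by positivity)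
  · rw [vabs_eq_pow Fq hvx, hvH]
    exact zpow_lt_zpow_right₀ hq1 (by omega)
end
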